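/- arXiv:1111.5214 — 2 statements merged into one kernel-verified Lean document; each statement's English description precedes it below -/
import Mathlib

section
/- Suppose there exists α > 0 such that x·f(k,x) ≤ 0 for all k ∈ Z[1,N] and all |x| > α, and suppose min_{k} p(k) > 0. Then the functional J is coercive on E (J(x) → +∞ as ‖x‖ → ∞), and consequently the boundary value problem Δⁿ(p(k-n)Δⁿx(k-n)) + (-1)^{n+1} f(k,x(k)) = 0 with Dirichlet conditions has at least one solution. -/
open Finset

/-- forward difference operator -/
def dd (x : ℤ → ℝ) : ℤ → ℝ := fun i => x (i + 1) - x i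

/-- extension of `v : Fin N → ℝ` to a function on `ℤ` supported on `Z[1,N]`
(thus vanishing on `Z[1-n,0] ∪ Z[N+1,N+n]`); this realizes the space `E`. -/
noncomputable def extendE (N : ℕ) (v : Fin N → ℝ) : ℤ → ℝ := fun i =>
  if h : 0 ≤ i - 1 ∧ (i - 1).toNat < N then v ⟨(i - 1).toNat, h.2⟩ else 0

/-- the norm of the space `E`: `‖x‖ = (∑_{k=1}^N x(k)²)^{1/2}` -/
noncomputable def normE (N : ℕ) (v : Fin N → ℝ) : ℝ :=
  Real.sqrt (∑ k ∈ Finset.Icc (1 : ℤ) (N : ℤ), (extendE N v k) ^ 2)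

/-- `F(k,s) = ∫₀ˢ f(k,t) dt` -/
noncomputable def Ffun (f : ℤ → ℝ → ℝ) (k : ℤ) (s : ℝ) : ℝ := ∫ t in (0 : ℝ)..s, f k t

/-- the action functional `J` -/
noncomputable def Jfun (n N : ℕ) (p : ℤ → ℝ) (F : ℤ → ℝ → ℝ) (v : Fin N → ℝ) : ℝ :=
  ∑ k ∈ Finset.Icc (1 - (n : ℤ)) (N : ℤ),
    ((1 / 2 : ℝ) * p k * (dd^[n] (extendE N v) k) ^ 2 - F k (extendE N v k))

/-- `v` solves the discrete BVP
`Δⁿ(p(k-n)Δⁿx(k-n)) + (-1)^{n+1} f(k,x(k)) = 0`, `k ∈ Z[1,N]`,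
with the Dirichlet boundary conditions built into `extendE`. -/
def Solves (n N : ℕ) (p : ℤ → ℝ) (f : ℤ → ℝ → ℝ) (v : Fin N → ℝ) : Prop :=
  ∀ k ∈ Finset.Icc (1 : ℤ) (N : ℤ),
    dd^[n] (fun j => p j * dd^[n] (extendE N v) j) (k - n)
      + (-1 : ℝ) ^ (n + 1) * f k (extendE N v k) = 0

/-- coercivity: `J(x) → +∞` as `‖x‖ → ∞` -/
def CoerciveE (N : ℕ) (J : (Fin N → ℝ) → ℝ) : Prop :=
  ∀ C : ℝ, ∃ R : ℝ, ∀ v : Fin N → ℝ, R ≤ normE N v → C ≤ J v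

/-- anti-coercivity: `J(x) → −∞` as `‖x‖ → ∞` -/
def AntiCoerciveE (N : ℕ) (J : (Fin N → ℝ) → ℝ) : Prop :=
  ∀ C : ℝ, ∃ R : ℝ, ∀ v : Fin N → ℝ, R ≤ normE N v → J v ≤ C

/-! ### Auxiliary lemmas -/

lemma extendE_eq_zero {N : ℕ} (v : Fin N → ℝ) {k : ℤ} (h : k ≤ 0 ∨ (N:ℤ) < k) :
    extendE N v k = 0 := by
  unfold extendE
  rw [dif_neg]
  rintro ⟨h1, h2⟩
  omega

lemma extendE_add {N : ℕ} (v w : Fin N → ℝ) (k : ℤ) :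
    extendE N (v + w) k = extendE N v k + extendE N w k := by
  unfold extendE
  by_cases h : 0 ≤ k - 1 ∧ (k - 1).toNat < N
  · rw [dif_pos h, dif_pos h, dif_pos h]; rfl
  · rw [dif_neg h, dif_neg h, dif_neg h]; ring

lemma extendE_smul {N : ℕ} (c : ℝ) (v : Fin N → ℝ) (k : ℤ) :
    extendE N (c • v) k = c * extendE N v k := by
  unfold extendE
  by_cases h : 0 ≤ k - 1 ∧ (k - 1).toNat < N
  · rw [dif_pos h, dif_pos h]; rfl
  · rw [dif_neg h, dif_neg h]; ring

lemma dd_iter (n : ℕ) (x : ℤ → ℝ) (k : ℤ) :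
    dd^[n] x k = ∑ j ∈ Finset.range (n+1), (-1:ℝ)^(n+j) * (n.choose j) * x (k + j) := by
  induction n generalizing k with
  | zero => simp
  | succ n ih =>
    rw [Function.iterate_succ_apply']
    show dd^[n] x (k+1) - dd^[n] x k = _
    rw [ih, ih]
    have hA : ∑ j ∈ Finset.range (n+1), (-1:ℝ)^(n+j) * (n.choose j) * x (k + 1 + j)
        = ∑ j ∈ Finset.range (n+2),
            (-1:ℝ)^(n+1+j) * (if j = 0 then 0 else (n.choose (j-1) : ℝ)) * x (k + j) := by
      rw [Finset.sum_range_succ' (fun j => (-1:ℝ)^(n+1+j) * (if j = 0 then 0 else (n.choose (j-1) : ℝ)) * x (k + j)) (n+1)]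
      have h0 : (-1:ℝ)^(n+1+0) * (if (0:ℕ) = 0 then (0:ℝ) else (n.choose (0-1) : ℝ)) * x (k + (0:ℕ)) = 0 := by
        norm_num
      rw [h0, add_zero]
      apply Finset.sum_congr rfl
      intro j hj
      have h1 : (-1:ℝ)^(n+1+(j+1)) = (-1:ℝ)^(n+j) := by
        have : n+1+(j+1) = (n+j) + 2 := by ring
        rw [this, pow_add]; norm_num
      rw [h1, if_neg (Nat.succ_ne_zero j), Nat.add_sub_cancel]
      congr 1
      push_cast
      ring_nf
    have hB : ∑ j ∈ Finset.range (n+2), (-1:ℝ)^(n+j) * (n.choose j) * x (k + j)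
        = ∑ j ∈ Finset.range (n+1), (-1:ℝ)^(n+j) * (n.choose j) * x (k + j) := by
      rw [Finset.sum_range_succ]
      simp
    rw [hA, ← hB, ← Finset.sum_sub_distrib]
    apply Finset.sum_congr rfl
    intro j hj
    have hneg : -((-1:ℝ)^(n+j)) = (-1:ℝ)^(n+1+j) := by
      rw [show n+1+j = (n+j)+1 by ring, pow_succ]; ring
    cases j with
    | zero =>
      rw [if_pos rfl]
      simp [← hneg]
    | succ j =>
      rw [if_neg (Nat.succ_ne_zero _), Nat.add_sub_cancel, Nat.choose_succ_succ n j]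
      push_cast
      rw [← hneg]
      have h1 : (-1:ℝ)^(n+(j+1)) = -(-1:ℝ)^(n+j) := by
        rw [show n+(j+1) = (n+j)+1 by ring, pow_succ]; ring
      rw [h1]
      ring

lemma dd_linear (n : ℕ) (x e : ℤ → ℝ) (t : ℝ) (k : ℤ) :
    dd^[n] (fun j => x j + t * e j) k = dd^[n] x k + t * dd^[n] e k := by
  simp only [dd_iter, Finset.mul_sum, ← Finset.sum_add_distrib]
  apply Finset.sum_congr rfl
  intro j hj
  ring

lemma dd_smul (n : ℕ) (c : ℝ) (x : ℤ → ℝ) (k : ℤ) :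
    dd^[n] (fun j => c * x j) k = c * dd^[n] x k := by
  simp only [dd_iter, Finset.mul_sum]
  exact Finset.sum_congr rfl fun j _ => by ring

lemma extendE_coord {N : ℕ} (v : Fin N → ℝ) (i : Fin N) :
    extendE N v ((i:ℤ)+1) = v i := by
  unfold extendE
  have h : 0 ≤ ((i:ℤ)+1) - 1 ∧ (((i:ℤ)+1) - 1).toNat < N := by
    constructor <;> omega
  rw [dif_pos h]
  congr 1
  ext
  simp

lemma extendE_eval {N : ℕ} (v : Fin N → ℝ) {k : ℤ} (h1 : 1 ≤ k) (h2 : k ≤ (N:ℤ)) :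
    extendE N v k = v ⟨(k-1).toNat, by omega⟩ := by
  unfold extendE
  rw [dif_pos ⟨by omega, by omega⟩]

lemma extendE_single {N : ℕ} (i : Fin N) (k : ℤ) :
    extendE N (Pi.single i 1) k = if k = (i:ℤ)+1 then 1 else 0 := by
  by_cases hk : k = (i:ℤ)+1
  · subst hk
    rw [extendE_coord, if_pos rfl, Pi.single_eq_same]
  · rw [if_neg hk]
    by_cases hb : 1 ≤ k ∧ k ≤ (N:ℤ)
    · rw [extendE_eval _ hb.1 hb.2, Pi.single_apply, if_neg]
      intro he
      apply hk
      have h2 : (k-1).toNat = (i:ℕ) := by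
        have := Fin.val_eq_val ⟨(k-1).toNat, by omega⟩ i |>.mpr he
        simpa using this
      omega
    · exact extendE_eq_zero _ (by omega)

lemma sum_sq_extendE {N : ℕ} (v : Fin N → ℝ) :
    ∑ k ∈ Finset.Icc (1:ℤ) (N:ℤ), (extendE N v k)^2 = ∑ i : Fin N, (v i)^2 := by
  rw [← Finset.sum_attach]
  apply Finset.sum_nbij' (i := fun k => (⟨(k.1-1).toNat, by
      have := k.2; rw [Finset.mem_Icc] at this; omega⟩ : Fin N))
    (j := fun i => (⟨(i:ℤ)+1, by rw [Finset.mem_Icc]; omega⟩ : {x // x ∈ Finset.Icc (1:ℤ) (N:ℤ)}))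
  · intro a _; exact Finset.mem_univ _
  · intro a _; exact Finset.mem_attach _ _
  · intro a _
    ext
    have := a.2; rw [Finset.mem_Icc] at this
    simp; omega
  · intro a _
    ext
    simp
  · intro a _
    have ha := a.2; rw [Finset.mem_Icc] at ha
    rw [extendE_eval _ ha.1 ha.2]

lemma posdef {n N : ℕ} (v : Fin N → ℝ)
    (h : ∀ k ∈ Finset.Icc (1-(n:ℤ)) (N:ℤ), dd^[n] (extendE N v) k = 0) : v = 0 := by
  have claim : ∀ j : ℕ, (j:ℤ) + 1 ≤ (N:ℤ) → extendE N v ((j:ℤ)+1) = 0 := by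
    intro j
    induction j using Nat.strong_induction_on with
    | _ j IH =>
      intro hjN
      have hk : ((j:ℤ)+1) - n ∈ Finset.Icc (1-(n:ℤ)) (N:ℤ) := by
        rw [Finset.mem_Icc]; omega
      have h0 := h _ hk
      rw [dd_iter] at h0
      rw [Finset.sum_range_succ] at h0
      have hlast : ((j:ℤ)+1) - n + (n:ℤ) = (j:ℤ)+1 := by ring
      rw [hlast] at h0
      have hzero : ∀ i ∈ Finset.range n,
          (-1:ℝ)^(n+i) * (n.choose i) * extendE N v (((j:ℤ)+1) - n + i) = 0 := by
        intro i hi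
        rw [Finset.mem_range] at hi
        set q : ℤ := ((j:ℤ)+1) - n + i with hq
        rcases le_or_gt q 0 with hq0 | hq0
        · rw [extendE_eq_zero v (Or.inl hq0), mul_zero]
        · have hq1 : q = ((q-1).toNat : ℤ) + 1 := by omega
          have hlt : (q-1).toNat < j := by omega
          rw [hq1, IH _ hlt (by omega), mul_zero]
      rw [Finset.sum_eq_zero hzero, zero_add] at h0
      have : (-1:ℝ)^(n+n) = 1 := by
        rw [← two_mul, pow_mul]; norm_num
      rw [this, Nat.choose_self] at h0
      simpa using h0
  funext i
  have := claim i (by exact_mod_cast Int.ofNat_le.mpr (Nat.succ_le_of_lt i.isLt))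
  rw [extendE_coord] at this
  simpa using this

lemma continuous_extendE_apply (N : ℕ) (k : ℤ) :
    Continuous (fun v : Fin N → ℝ => extendE N v k) := by
  unfold extendE
  by_cases h : 0 ≤ k - 1 ∧ (k - 1).toNat < N
  · simp only [dif_pos h]; exact continuous_apply _
  · simp only [dif_neg h]; exact continuous_const

lemma continuous_dd_apply (n N : ℕ) (k : ℤ) :
    Continuous (fun v : Fin N → ℝ => dd^[n] (extendE N v) k) := by
  simp only [dd_iter]
  apply continuous_finset_sum
  intro j _
  exact (continuous_const.mul (continuous_extendE_apply N (k + j)))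

lemma exists_pos_lambda (n N : ℕ) (hN : 1 ≤ N) :
    ∃ lam : ℝ, 0 < lam ∧ ∀ v : Fin N → ℝ,
      lam * (∑ i, (v i)^2) ≤ ∑ k ∈ Finset.Icc (1-(n:ℤ)) (N:ℤ), (dd^[n] (extendE N v) k)^2 := by
  set Q : (Fin N → ℝ) → ℝ :=
    fun v => ∑ k ∈ Finset.Icc (1-(n:ℤ)) (N:ℤ), (dd^[n] (extendE N v) k)^2 with hQ
  have hQcont : Continuous Q := by
    apply continuous_finset_sum
    intro k _
    exact (continuous_dd_apply n N k).pow 2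
  have hQnonneg : ∀ v, 0 ≤ Q v := fun v => Finset.sum_nonneg fun k _ => sq_nonneg _
  set S : Set (EuclideanSpace ℝ (Fin N)) := Metric.sphere 0 1 with hS
  have hScomp : IsCompact S := isCompact_sphere 0 1
  have hSne : S.Nonempty := by
    refine ⟨EuclideanSpace.single ⟨0, hN⟩ (1:ℝ), ?_⟩
    simp [S, EuclideanSpace.norm_single]
  have hQcont' : Continuous (fun v : EuclideanSpace ℝ (Fin N) => Q ((WithLp.equiv 2 _) v)) :=
    hQcont.comp (PiLp.continuous_ofLp 2 _)
  obtain ⟨w, hwS, hwmin⟩ := hScomp.exists_isMinOn hSne hQcont'.continuousOn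
  set lam := Q ((WithLp.equiv 2 _) w) with hlam
  have hwnorm : ‖w‖ = 1 := by simpa [S] using hwS
  have hlampos : 0 < lam := by
    rcases lt_or_eq_of_le (hQnonneg ((WithLp.equiv 2 _) w)) with h | h
    · exact h
    · exfalso
      have hz : ∀ k ∈ Finset.Icc (1-(n:ℤ)) (N:ℤ), dd^[n] (extendE N ((WithLp.equiv 2 _) w)) k = 0 := by
        have := (Finset.sum_eq_zero_iff_of_nonneg (fun k _ => sq_nonneg _)).mp h.symm
        intro k hk
        exact pow_eq_zero_iff (n := 2) (by norm_num) |>.mp (this k hk)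
      have := posdef _ hz
      have : w = 0 := by simpa using this
      rw [this] at hwnorm
      simp at hwnorm
  refine ⟨lam, hlampos, ?_⟩
  intro v
  by_cases hv : v = 0
  · subst hv
    have h0 := hQnonneg 0
    simp only [hQ] at h0
    simpa using h0
  · set v' : EuclideanSpace ℝ (Fin N) := (WithLp.equiv 2 _).symm v with hv'
    have hv'ne : v' ≠ 0 := by
      intro h
      apply hv
      have : (WithLp.equiv 2 (Fin N → ℝ)) v' = (WithLp.equiv 2 (Fin N → ℝ)) 0 := by rw [h]
      simpa [v'] using this
    set c : ℝ := ‖v'‖ with hc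
    have hcpos : 0 < c := norm_pos_iff.mpr hv'ne
    have hw' : (c⁻¹ • v') ∈ S := by
      simp only [S, Metric.mem_sphere, dist_zero_right, norm_smul, norm_inv, norm_norm]
      rw [← hc]
      field_simp
      rw [Real.norm_eq_abs, abs_of_pos hcpos, div_self hcpos.ne']
    have hle : lam ≤ Q (c⁻¹ • v) := hwmin hw'
    have hQsc : Q (c⁻¹ • v) = c⁻¹^2 * Q v := by
      simp only [hQ, Finset.mul_sum]
      apply Finset.sum_congr rfl
      intro k _
      have : extendE N (c⁻¹ • v) = fun j => c⁻¹ * extendE N v j := by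
        funext j; exact extendE_smul _ _ _
      rw [this, dd_smul]
      ring
    rw [hQsc] at hle
    have hnormsq : ∑ i, (v i)^2 = c^2 := by
      rw [hc, EuclideanSpace.norm_eq]
      rw [Real.sq_sqrt (Finset.sum_nonneg fun i _ => sq_nonneg _)]
      apply Finset.sum_congr rfl
      intro i _
      rw [Real.norm_eq_abs, sq_abs]
      rfl
    rw [hnormsq]
    calc lam * c^2 ≤ (c⁻¹^2 * Q v) * c^2 := by
          exact mul_le_mul_of_nonneg_right hle (sq_nonneg c)
      _ = Q v := by field_simp

lemma Ffun_cont (f : ℤ → ℝ → ℝ) (hf : ∀ k, Continuous (f k)) (k : ℤ) :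
    Continuous (Ffun f k) :=
  intervalIntegral.continuous_primitive (fun a b => (hf k).intervalIntegrable a b) 0

lemma f_nonpos_of_ge (f : ℤ → ℝ → ℝ) (hf : Continuous (f 0)) {α : ℝ} (hα : 0 < α)
    (hsignk : ∀ u : ℝ, α < |u| → u * f 0 u ≤ 0) :
    ∀ t, α ≤ t → f 0 t ≤ 0 := by
  have hstrict : ∀ t, α < t → f 0 t ≤ 0 := by
    intro t ht
    have h := hsignk t (by rw [abs_of_pos (lt_trans hα ht)]; exact ht)
    by_contra hpos
    push_neg at hpos
    nlinarith
  intro t ht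
  rcases eq_or_lt_of_le ht with heq | hlt
  · rw [← heq]
    have htnd : Filter.Tendsto (f 0) (nhdsWithin α (Set.Ioi α)) (nhds (f 0 α)) :=
      (hf.tendsto α).mono_left nhdsWithin_le_nhds
    exact le_of_tendsto htnd (eventually_nhdsWithin_of_forall fun s hs => hstrict s hs)
  · exact hstrict t hlt

lemma f_nonneg_of_le (f : ℤ → ℝ → ℝ) (hf : Continuous (f 0)) {α : ℝ} (hα : 0 < α)
    (hsignk : ∀ u : ℝ, α < |u| → u * f 0 u ≤ 0) :
    ∀ t, t ≤ -α → 0 ≤ f 0 t := by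
  have hstrict : ∀ t, t < -α → 0 ≤ f 0 t := by
    intro t ht
    have habs : α < |t| := by rw [abs_of_neg (by linarith)]; linarith
    have h := hsignk t habs
    by_contra hneg
    push_neg at hneg
    nlinarith
  intro t ht
  rcases eq_or_lt_of_le ht with heq | hlt
  · rw [heq]
    have htnd : Filter.Tendsto (f 0) (nhdsWithin (-α) (Set.Iio (-α))) (nhds (f 0 (-α))) :=
      (hf.tendsto (-α)).mono_left nhdsWithin_le_nhds
    exact ge_of_tendsto htnd (eventually_nhdsWithin_of_forall fun s hs => hstrict s hs)
  · exact hstrict t hlt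

lemma Ffun_bounded (f : ℤ → ℝ → ℝ) (hf : ∀ k, Continuous (f k)) {α : ℝ} (hα : 0 < α)
    (k : ℤ) (hsignk : ∀ u : ℝ, α < |u| → u * f k u ≤ 0) :
    ∃ M : ℝ, ∀ u : ℝ, Ffun f k u ≤ M := by
  obtain ⟨u₀, hu₀, hmax⟩ := isCompact_Icc.exists_isMaxOn (α := ℝ)
    (Set.nonempty_Icc.mpr (by linarith : -α ≤ α)) ((Ffun_cont f hf k).continuousOn)
  refine ⟨Ffun f k u₀, ?_⟩
  have hnonpos : ∀ t, α ≤ t → f k t ≤ 0 := by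
    intro t ht
    exact f_nonpos_of_ge (fun _ => f k) (hf k) hα (fun u hu => hsignk u hu) t ht
  have hnonneg : ∀ t, t ≤ -α → 0 ≤ f k t := by
    intro t ht
    exact f_nonneg_of_le (fun _ => f k) (hf k) hα (fun u hu => hsignk u hu) t ht
  intro u
  rcases le_or_gt u α with h1 | h1
  · rcases le_or_gt (-α) u with h2 | h2
    · exact hmax ⟨h2, h1⟩
    · have hsplit : Ffun f k (-α) + ∫ t in (-α)..u, f k t = Ffun f k u :=
        intervalIntegral.integral_add_adjacent_intervals
          ((hf k).intervalIntegrable _ _) ((hf k).intervalIntegrable _ _)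
      have hint : (∫ t in (-α)..u, f k t) ≤ 0 := by
        rw [intervalIntegral.integral_symm]
        have : 0 ≤ ∫ t in u..(-α), f k t :=
          intervalIntegral.integral_nonneg (by linarith) (fun t ht => hnonneg t ht.2)
        linarith
      have : Ffun f k u ≤ Ffun f k (-α) := by linarith
      exact le_trans this (hmax ⟨le_refl _, by linarith⟩)
  · have hsplit : Ffun f k α + ∫ t in α..u, f k t = Ffun f k u :=
      intervalIntegral.integral_add_adjacent_intervals
        ((hf k).intervalIntegrable _ _) ((hf k).intervalIntegrable _ _)
    have hint : (∫ t in α..u, f k t) ≤ 0 := by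
      have : 0 ≤ ∫ t in α..u, -(f k t) :=
        intervalIntegral.integral_nonneg (le_of_lt h1) (fun t ht => by
          have := hnonpos t ht.1; linarith)
      rw [intervalIntegral.integral_neg] at this
      linarith
    have : Ffun f k u ≤ Ffun f k α := by linarith
    exact le_trans this (hmax ⟨by linarith, le_refl _⟩)

lemma sumF_bounded (n N : ℕ) (f : ℤ → ℝ → ℝ) (hf : ∀ k, Continuous (f k))
    {α : ℝ} (hα : 0 < α)
    (hsign : ∀ k ∈ Finset.Icc (1:ℤ) (N:ℤ), ∀ u : ℝ, α < |u| → u * f k u ≤ 0) :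
    ∃ B : ℝ, ∀ v : Fin N → ℝ,
      ∑ k ∈ Finset.Icc (1-(n:ℤ)) (N:ℤ), Ffun f k (extendE N v k) ≤ B := by
  have hMk : ∀ k : ℤ, ∃ M : ℝ, k ∈ Finset.Icc (1:ℤ) (N:ℤ) → ∀ u, Ffun f k u ≤ M := by
    intro k
    by_cases hk : k ∈ Finset.Icc (1:ℤ) (N:ℤ)
    · obtain ⟨M, hM⟩ := Ffun_bounded f hf hα k (hsign k hk)
      exact ⟨M, fun _ => hM⟩
    · exact ⟨0, fun h => absurd h hk⟩
  choose M hM using hMk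
  refine ⟨∑ k ∈ Finset.Icc (1-(n:ℤ)) (N:ℤ), max (M k) 0, ?_⟩
  intro v
  apply Finset.sum_le_sum
  intro k hk
  by_cases hk1 : k ∈ Finset.Icc (1:ℤ) (N:ℤ)
  · exact le_trans (hM k hk1 _) (le_max_left _ _)
  · have hz : extendE N v k = 0 := by
      apply extendE_eq_zero
      rw [Finset.mem_Icc] at hk
      rw [Finset.mem_Icc] at hk1
      omega
    rw [hz]
    have : Ffun f k 0 = 0 := intervalIntegral.integral_same
    rw [this]
    exact le_max_right _ _

lemma Ffun_hasDerivAt (f : ℤ → ℝ → ℝ) (hf : ∀ k, Continuous (f k)) (k : ℤ) (s : ℝ) :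
    HasDerivAt (Ffun f k) (f k s) s := by
  apply intervalIntegral.integral_hasDerivAt_right
    ((hf k).intervalIntegrable _ _)
    ((hf k).stronglyMeasurable.stronglyMeasurableAtFilter)
    ((hf k).continuousAt)

lemma euler_lagrange (n N : ℕ) (p : ℤ → ℝ) (f : ℤ → ℝ → ℝ) (hf : ∀ k, Continuous (f k))
    (v₀ : Fin N → ℝ) (hmin : ∀ v, Jfun n N p (Ffun f) v₀ ≤ Jfun n N p (Ffun f) v)
    (i : Fin N) (hiN : ((i:ℤ)+1) ≤ (N:ℤ)) :
    ∑ k ∈ Finset.Icc (1 - (n:ℤ)) (N:ℤ),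
        p k * dd^[n] (extendE N v₀) k * dd^[n] (extendE N (Pi.single i 1)) k
      = f ((i:ℤ)+1) (extendE N v₀ ((i:ℤ)+1)) := by
  classical
  set m : ℤ := (i:ℤ)+1 with hm
  set x : ℤ → ℝ := extendE N v₀ with hx
  set e : ℤ → ℝ := extendE N (Pi.single i 1) with he
  set d : ℤ → ℝ := fun k => dd^[n] x k with hd
  set b : ℤ → ℝ := fun k => dd^[n] e k with hb
  set φ : ℝ → ℝ := fun t => Jfun n N p (Ffun f) (v₀ + t • (Pi.single i 1 : Fin N → ℝ)) with hφ
  have hext : ∀ t : ℝ, extendE N (v₀ + t • (Pi.single i 1 : Fin N → ℝ)) = fun j => x j + t * e j := by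
    intro t; funext j
    rw [extendE_add, extendE_smul]
  have hφ' : ∀ t, φ t = ∑ k ∈ Finset.Icc (1 - (n:ℤ)) (N:ℤ),
      ((1/2 : ℝ) * p k * (d k + t * b k)^2 - Ffun f k (x k + t * e k)) := by
    intro t
    simp only [hφ, Jfun, hext t]
    apply Finset.sum_congr rfl
    intro k _
    rw [dd_linear]
  have hderiv : HasDerivAt φ
      (∑ k ∈ Finset.Icc (1 - (n:ℤ)) (N:ℤ), (p k * d k * b k - f k (x k) * e k)) 0 := by
    rw [show φ = fun t => ∑ k ∈ Finset.Icc (1 - (n:ℤ)) (N:ℤ),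
      ((1/2 : ℝ) * p k * (d k + t * b k)^2 - Ffun f k (x k + t * e k)) from funext hφ']
    apply HasDerivAt.fun_sum
    intro k _
    have hlin : HasDerivAt (fun t : ℝ => d k + t * b k) (b k) 0 := by
      simpa using ((hasDerivAt_id (0:ℝ)).mul_const (b k)).const_add (d k)
    have h1 : HasDerivAt (fun t : ℝ => (1/2 : ℝ) * p k * (d k + t * b k)^2)
        (p k * d k * b k) 0 := by
      have := (hlin.fun_pow 2).const_mul ((1/2 : ℝ) * p k)
      refine this.congr_deriv ?_
      simp
      ring
    have hlin2 : HasDerivAt (fun t : ℝ => x k + t * e k) (e k) 0 := by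
      simpa using ((hasDerivAt_id (0:ℝ)).mul_const (e k)).const_add (x k)
    have hG : HasDerivAt (Ffun f k) (f k (x k)) ((fun t : ℝ => x k + t * e k) 0) := by
      have : (fun t : ℝ => x k + t * e k) 0 = x k := by simp
      rw [this]
      exact Ffun_hasDerivAt f hf k (x k)
    have h2 : HasDerivAt (fun t : ℝ => Ffun f k (x k + t * e k)) (f k (x k) * e k) 0 :=
      by have h := HasDerivAt.comp (0:ℝ) hG hlin2; exact h
    exact h1.sub h2
  have hloc : IsLocalMin φ 0 := by
    apply Filter.Eventually.of_forall
    intro t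
    have h0 : φ 0 = Jfun n N p (Ffun f) v₀ := by
      simp only [hφ]
      congr 1
      simp
    rw [h0]
    exact hmin _
  have hEL := hloc.hasDerivAt_eq_zero hderiv
  rw [Finset.sum_sub_distrib] at hEL
  have hsum2 : ∑ k ∈ Finset.Icc (1 - (n:ℤ)) (N:ℤ), f k (x k) * e k = f m (x m) := by
    have : ∀ k ∈ Finset.Icc (1 - (n:ℤ)) (N:ℤ),
        f k (x k) * e k = if k = m then f k (x k) else 0 := by
      intro k _
      rw [he, extendE_single]
      by_cases h : k = m
      · rw [if_pos h, if_pos h, mul_one]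
      · rw [if_neg h, if_neg h, mul_zero]
    rw [Finset.sum_congr rfl this, Finset.sum_ite_eq' _ m (fun k => f k (x k)),
      if_pos (by rw [Finset.mem_Icc]; omega)]
  rw [hsum2] at hEL
  have : ∑ k ∈ Finset.Icc (1 - (n:ℤ)) (N:ℤ), p k * d k * b k = f m (x m) := by linarith
  exact this

lemma key_identity (n N : ℕ) (g : ℤ → ℝ) (i : Fin N) :
    ∑ k ∈ Finset.Icc (1-(n:ℤ)) (N:ℤ), g k * dd^[n] (extendE N (Pi.single i 1)) k
      = (-1:ℝ)^n * dd^[n] g ((i:ℤ)+1 - n) := by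
  classical
  set m : ℤ := (i:ℤ)+1 with hm
  have hm1 : 1 ≤ m := by omega
  have hmN : m ≤ (N:ℤ) := by have := i.isLt; omega
  have hLHS : ∑ k ∈ Finset.Icc (1-(n:ℤ)) (N:ℤ), g k * dd^[n] (extendE N (Pi.single i 1)) k
      = ∑ j ∈ Finset.range (n+1), (-1:ℝ)^(n+j) * (n.choose j) * g (m - j) := by
    have hterm : ∀ k ∈ Finset.Icc (1-(n:ℤ)) (N:ℤ),
        g k * dd^[n] (extendE N (Pi.single i 1)) k
          = ∑ j ∈ Finset.range (n+1),
              (-1:ℝ)^(n+j) * (n.choose j) * (if k = m - j then g k else 0) := by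
      intro k _
      rw [dd_iter, Finset.mul_sum]
      apply Finset.sum_congr rfl
      intro j _
      rw [extendE_single]
      by_cases h : k + (j:ℤ) = m
      · rw [if_pos h, if_pos (by omega : k = m - j)]
        ring
      · rw [if_neg h, if_neg (by omega : ¬ k = m - j)]
        ring
    rw [Finset.sum_congr rfl hterm, Finset.sum_comm]
    apply Finset.sum_congr rfl
    intro j hj
    rw [Finset.mem_range] at hj
    rw [← Finset.mul_sum, Finset.sum_ite_eq' _ (m - j) g, if_pos]
    rw [Finset.mem_Icc]
    omega
  rw [hLHS, dd_iter, Finset.mul_sum]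
  rw [← Finset.sum_range_reflect (fun j => (-1:ℝ)^n * ((-1:ℝ)^(n+j) * (n.choose j) * g (m - n + j))) (n+1)]
  apply Finset.sum_congr rfl
  intro j hj
  rw [Finset.mem_range] at hj
  have hj' : j ≤ n := by omega
  have h1 : n + 1 - 1 - j = n - j := by omega
  rw [h1, Nat.choose_symm hj']
  have h2 : m - (n:ℤ) + ((n - j : ℕ) : ℤ) = m - j := by
    push_cast [Nat.cast_sub hj']
    ring
  rw [h2]
  have h3 : (-1:ℝ)^n * (-1:ℝ)^(n+(n-j)) = (-1:ℝ)^(n+j) := by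
    rw [← pow_add]
    have : n + (n + (n - j)) = (n + j) + 2*(n - j) := by omega
    rw [this, pow_add, pow_mul]
    norm_num
  rw [← mul_assoc, ← mul_assoc, h3]

theorem stmt5 (n N : ℕ) (hn : 1 ≤ n) (hN : 2 ≤ N) (p : ℤ → ℝ)
    (f : ℤ → ℝ → ℝ) (hf : ∀ k, Continuous (f k))
    (hp : ∀ k ∈ Finset.Icc (1 - (n : ℤ)) (N : ℤ), 0 < p k)
    (α : ℝ) (hα : 0 < α)
    (hsign : ∀ k ∈ Finset.Icc (1 : ℤ) (N : ℤ), ∀ u : ℝ, α < |u| → u * f k u ≤ 0) :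
    CoerciveE N (Jfun n N p (Ffun f)) ∧ ∃ v : Fin N → ℝ, Solves n N p f v := by
  classical
  obtain ⟨lam, hlampos, hQ⟩ := exists_pos_lambda n N (by omega)
  obtain ⟨k₀, hk₀, hpmin⟩ := Finset.exists_min_image (Finset.Icc (1-(n:ℤ)) (N:ℤ)) p
    (Finset.nonempty_Icc.mpr (by omega))
  set pm : ℝ := p k₀ with hpm
  have hpm0 : 0 < pm := hp k₀ hk₀
  obtain ⟨B, hB⟩ := sumF_bounded n N f hf hα hsign
  set c : ℝ := pm * lam / 2 with hc
  have hcpos : 0 < c := by positivity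
  have hnormsq : ∀ v : Fin N → ℝ, (normE N v)^2 = ∑ i, (v i)^2 := by
    intro v
    rw [normE, Real.sq_sqrt (Finset.sum_nonneg fun k _ => sq_nonneg _), sum_sq_extendE]
  have hlower : ∀ v : Fin N → ℝ, c * (normE N v)^2 - B ≤ Jfun n N p (Ffun f) v := by
    intro v
    rw [Jfun, Finset.sum_sub_distrib]
    have h1 : ∑ k ∈ Finset.Icc (1-(n:ℤ)) (N:ℤ), (pm/2) * (dd^[n] (extendE N v) k)^2
        ≤ ∑ k ∈ Finset.Icc (1-(n:ℤ)) (N:ℤ), (1/2 : ℝ) * p k * (dd^[n] (extendE N v) k)^2 := by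
      apply Finset.sum_le_sum
      intro k hk
      have := hpmin k hk
      nlinarith [sq_nonneg (dd^[n] (extendE N v) k)]
    have h2 : c * (normE N v)^2
        ≤ ∑ k ∈ Finset.Icc (1-(n:ℤ)) (N:ℤ), (pm/2) * (dd^[n] (extendE N v) k)^2 := by
      rw [← Finset.mul_sum, hnormsq v]
      have := hQ v
      calc c * ∑ i, (v i)^2 = (pm/2) * (lam * ∑ i, (v i)^2) := by rw [hc]; ring
        _ ≤ (pm/2) * ∑ k ∈ Finset.Icc (1-(n:ℤ)) (N:ℤ), (dd^[n] (extendE N v) k)^2 := by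
            apply mul_le_mul_of_nonneg_left this (by positivity)
    have h3 := hB v
    linarith
  have hcoer : CoerciveE N (Jfun n N p (Ffun f)) := by
    intro C
    refine ⟨Real.sqrt (max ((C+B)/c) 0), ?_⟩
    intro v hR
    have hr0 : (0:ℝ) ≤ Real.sqrt (max ((C+B)/c) 0) := Real.sqrt_nonneg _
    have h1 : max ((C+B)/c) 0 ≤ (normE N v)^2 := by
      calc max ((C+B)/c) 0 = (Real.sqrt (max ((C+B)/c) 0))^2 :=
            (Real.sq_sqrt (le_max_right _ _)).symm
        _ ≤ (normE N v)^2 := pow_le_pow_left₀ hr0 hR 2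
    have h2 : C + B ≤ c * (normE N v)^2 := by
      have h1' : (C+B)/c ≤ (normE N v)^2 := le_trans (le_max_left _ _) h1
      rw [div_le_iff₀ hcpos] at h1'
      linarith
    linarith [hlower v]
  refine ⟨hcoer, ?_⟩
  -- existence of a minimizer
  have hJcont : Continuous (Jfun n N p (Ffun f)) := by
    unfold Jfun
    apply continuous_finset_sum
    intro k _
    exact (continuous_const.mul ((continuous_dd_apply n N k).pow 2)).sub
      ((Ffun_cont f hf k).comp (continuous_extendE_apply N k))
  obtain ⟨R, hR⟩ := hcoer (Jfun n N p (Ffun f) 0)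
  set R' : ℝ := max R 0 with hR'
  set K : Set (EuclideanSpace ℝ (Fin N)) := Metric.closedBall 0 R' with hK
  have hKcomp : IsCompact K := isCompact_closedBall 0 R'
  have h0K : (0 : EuclideanSpace ℝ (Fin N)) ∈ K := by
    simp [K, R', le_max_right R 0]
  have hKne : K.Nonempty := ⟨0, h0K⟩
  have hJ'cont : Continuous
      (fun w : EuclideanSpace ℝ (Fin N) => Jfun n N p (Ffun f) ((WithLp.equiv 2 _) w)) :=
    hJcont.comp (PiLp.continuous_ofLp 2 _)
  obtain ⟨w, hwK, hwmin⟩ := hKcomp.exists_isMinOn hKne hJ'cont.continuousOn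
  set v₀ : Fin N → ℝ := (WithLp.equiv 2 _) w with hv₀
  have hnormE_eq : ∀ v : Fin N → ℝ, normE N v = ‖(WithLp.equiv 2 (Fin N → ℝ)).symm v‖ := by
    intro v
    rw [normE, sum_sq_extendE, EuclideanSpace.norm_eq]
    congr 1
    apply Finset.sum_congr rfl
    intro i _
    rw [Real.norm_eq_abs, sq_abs]
    rfl
  have hglobal : ∀ v, Jfun n N p (Ffun f) v₀ ≤ Jfun n N p (Ffun f) v := by
    intro v
    set v' : EuclideanSpace ℝ (Fin N) := (WithLp.equiv 2 _).symm v with hv'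
    by_cases hvK : v' ∈ K
    · have := hwmin hvK
      exact this
    · have hnrm : R' < ‖v'‖ := by
        simp only [K, Metric.mem_closedBall, dist_zero_right, not_le] at hvK
        exact hvK
      have hge : R ≤ normE N v := by
        rw [hnormE_eq v, ← hv']
        have : R ≤ R' := le_max_left _ _
        linarith
      have hJv : Jfun n N p (Ffun f) 0 ≤ Jfun n N p (Ffun f) v := hR v hge
      have hJ0 : Jfun n N p (Ffun f) v₀ ≤ Jfun n N p (Ffun f) 0 := by
        have := hwmin h0K
        exact this
      linarith
  refine ⟨v₀, ?_⟩
  intro k hk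
  rw [Finset.mem_Icc] at hk
  set i : Fin N := ⟨(k-1).toNat, by omega⟩ with hi
  have hki : k = (i:ℤ)+1 := by
    simp only [hi]
    omega
  have hiN : ((i:ℤ)+1) ≤ (N:ℤ) := by omega
  have hEL := euler_lagrange n N p f hf v₀ hglobal i hiN
  have hid := key_identity n N (fun j => p j * dd^[n] (extendE N v₀) j) i
  have hsumeq : ∑ k ∈ Finset.Icc (1 - (n:ℤ)) (N:ℤ),
      p k * dd^[n] (extendE N v₀) k * dd^[n] (extendE N (Pi.single i 1)) k
    = ∑ k ∈ Finset.Icc (1 - (n:ℤ)) (N:ℤ),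
      (fun j => p j * dd^[n] (extendE N v₀) j) k * dd^[n] (extendE N (Pi.single i 1)) k := rfl
  rw [hsumeq, hid] at hEL
  set D : ℝ := dd^[n] (fun j => p j * dd^[n] (extendE N v₀) j) ((i:ℤ)+1 - n) with hD
  rw [hki]
  show D + (-1:ℝ)^(n+1) * f ((i:ℤ)+1) (extendE N v₀ ((i:ℤ)+1)) = 0
  rw [← hEL]
  have hsgn : (-1:ℝ)^(n+1) * (-1:ℝ)^n = -1 := by
    rw [← pow_add]
    exact Odd.neg_one_pow ⟨n, by ring⟩
  calc D + (-1:ℝ)^(n+1) * ((-1:ℝ)^n * D)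
      = D + ((-1:ℝ)^(n+1) * (-1:ℝ)^n) * D := by ring
    _ = 0 := by rw [hsgn]; ring
end

section
/- Suppose there exist constants M ≥ 0, α ∈ ℝ, and 1 ≤ q < 2 such that F(k,u) ≤ α|u|^q for all k ∈ Z[1,N] and |u| > M, and min_k p(k) > 0. Then J is coercive on E. -/
open Finset

open Filter in
lemma tendsto_aux (c a b q : ℝ) (hc : 0 < c) (hq0 : 0 < q) (hq2 : q < 2) :
    Tendsto (fun r : ℝ => c * r ^ 2 - a * r ^ q - b) atTop atTop := by
  have h2q : (0:ℝ) < 2 - q := by linarith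
  have hg : Tendsto (fun r : ℝ => r ^ q * (c * r ^ (2 - q) - a) - b) atTop atTop := by
    apply tendsto_atTop_add_const_right
    apply Tendsto.atTop_mul_atTop₀ (tendsto_rpow_atTop hq0)
    apply tendsto_atTop_add_const_right
    exact (tendsto_rpow_atTop h2q).const_mul_atTop hc
  apply hg.congr'
  filter_upwards [eventually_gt_atTop (0:ℝ)] with r hr
  have h2 : (r:ℝ) ^ (2:ℕ) = r ^ q * r ^ (2 - q) := by
    rw [← Real.rpow_add hr, ← Real.rpow_natCast r 2]; norm_num
  rw [h2]; ring

lemma extendE_zero (N : ℕ) (v : Fin N → ℝ) (k : ℤ) (hk : k ≤ 0) : extendE N v k = 0 := by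
  rw [extendE, dif_neg]
  rintro ⟨h1, -⟩; omega

theorem stmt8 (n N : ℕ) (hn : 1 ≤ n) (hN : 2 ≤ N) (p : ℤ → ℝ)
    (F : ℤ → ℝ → ℝ) (hF : ∀ k, Continuous (F k))
    (pmin : ℝ) (hpmin : 0 < pmin)
    (hp : ∀ k ∈ Finset.Icc (1 - (n : ℤ)) (N : ℤ), pmin ≤ p k)
    (lam : ℝ) (hlam : 0 < lam)
    (hpoin : ∀ v : Fin N → ℝ,
      lam * ∑ k ∈ Finset.Icc (1 : ℤ) (N : ℤ), (extendE N v k) ^ 2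
        ≤ ∑ k ∈ Finset.Icc (1 - (n : ℤ)) (N : ℤ), (dd^[n] (extendE N v) k) ^ 2)
    (M α : ℝ) (q : ℝ) (hM : 0 ≤ M) (hq1 : 1 ≤ q) (hq2 : q < 2)
    (hFle : ∀ k ∈ Finset.Icc (1 : ℤ) (N : ℤ), ∀ u : ℝ, M < |u| → F k u ≤ α * |u| ^ q) :
    CoerciveE N (Jfun n N p F) := by
  simp only [CoerciveE, Jfun]
  have hq0 : (0:ℝ) < q := lt_of_lt_of_le one_pos hq1
  -- bound for F on the compact set [-M,M]
  have hbd : ∀ k : ℤ, ∃ Bk : ℝ, 0 ≤ Bk ∧ ∀ y ∈ Set.Icc (-M) M, F k y ≤ Bk := by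
    intro k
    obtain ⟨z, hz, hmax⟩ := (isCompact_Icc (a := -M) (b := M)).exists_isMaxOn
      (Set.nonempty_Icc.mpr (by linarith)) (hF k).continuousOn
    exact ⟨max (F k z) 0, le_max_right _ _,
      fun y hy => le_trans (hmax hy) (le_max_left _ _)⟩
  choose Bf hBf0 hBf using hbd
  set B : ℝ := ∑ k ∈ Finset.Icc (1:ℤ) (N:ℤ), Bf k with hBdef
  set C0 : ℝ := ∑ k ∈ Finset.Ico (1 - (n:ℤ)) (1:ℤ), F k 0 with hC0def
  set c : ℝ := pmin * lam / 2 with hcdef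
  intro C
  have hg := tendsto_aux c (|α| * N) (B + C0) q (by positivity) hq0 hq2
  obtain ⟨R, hR⟩ := Filter.eventually_atTop.mp (hg.eventually (Filter.eventually_ge_atTop C))
  refine ⟨R, fun v hv => ?_⟩
  set x := extendE N v with hxdef
  set d := dd^[n] x with hddef
  set r := normE N v with hrdef
  have hr0 : 0 ≤ r := Real.sqrt_nonneg _
  have hsum0 : 0 ≤ ∑ k ∈ Finset.Icc (1:ℤ) (N:ℤ), x k ^ 2 :=
    Finset.sum_nonneg fun k _ => sq_nonneg _
  have hr2 : r ^ 2 = ∑ k ∈ Finset.Icc (1:ℤ) (N:ℤ), x k ^ 2 := Real.sq_sqrt hsum0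
  have habs : ∀ k ∈ Finset.Icc (1:ℤ) (N:ℤ), |x k| ≤ r := by
    intro k hk
    rw [← Real.sqrt_sq_eq_abs]
    exact Real.sqrt_le_sqrt (Finset.single_le_sum (fun i _ => sq_nonneg (x i)) hk)
  -- bound the F-sum over Icc 1 N
  have hFsum : ∑ k ∈ Finset.Icc (1:ℤ) (N:ℤ), F k (x k) ≤ |α| * N * r ^ q + B := by
    have h1 : ∀ k ∈ Finset.Icc (1:ℤ) (N:ℤ), F k (x k) ≤ |α| * r ^ q + Bf k := by
      intro k hk
      have hxr := habs k hk
      have hrq0 : (0:ℝ) ≤ |α| * r ^ q :=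
        mul_nonneg (abs_nonneg α) (Real.rpow_nonneg hr0 q)
      rcases le_or_gt (|x k|) M with h | h
      · have := hBf k (x k) (abs_le.mp h)
        linarith
      · have h1 := hFle k hk (x k) h
        have h2 : α * |x k| ^ q ≤ |α| * |x k| ^ q :=
          mul_le_mul_of_nonneg_right (le_abs_self α) (Real.rpow_nonneg (abs_nonneg _) q)
        have h3 : |α| * |x k| ^ q ≤ |α| * r ^ q :=
          mul_le_mul_of_nonneg_left (Real.rpow_le_rpow (abs_nonneg _) hxr (le_of_lt hq0))
            (abs_nonneg α)
        have := hBf0 k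
        linarith
    calc ∑ k ∈ Finset.Icc (1:ℤ) (N:ℤ), F k (x k)
        ≤ ∑ k ∈ Finset.Icc (1:ℤ) (N:ℤ), (|α| * r ^ q + Bf k) := Finset.sum_le_sum h1
      _ = (Finset.Icc (1:ℤ) (N:ℤ)).card • (|α| * r ^ q) + B := by
          rw [Finset.sum_add_distrib, Finset.sum_const]
      _ = |α| * N * r ^ q + B := by
          rw [Int.card_Icc]
          have hcard : ((N:ℤ) + 1 - 1).toNat = N := by omega
          rw [hcard, nsmul_eq_mul]
          ring
  -- split the J-sum
  have hmem : ∀ k ∈ Finset.Icc (1 - (n:ℤ)) (N:ℤ), True := fun _ _ => trivial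
  have hsplit : ∑ k ∈ Finset.Icc (1 - (n:ℤ)) (N:ℤ), F k (x k)
      = C0 + ∑ k ∈ Finset.Icc (1:ℤ) (N:ℤ), F k (x k) := by
    have e1 : Finset.Icc (1 - (n:ℤ)) (N:ℤ)
        = Finset.Ico (1 - (n:ℤ)) (1:ℤ) ∪ Finset.Icc (1:ℤ) (N:ℤ) := by
      ext k
      simp only [Finset.mem_Icc, Finset.mem_Ico, Finset.mem_union]
      omega
    have hdisj : Disjoint (Finset.Ico (1 - (n:ℤ)) (1:ℤ)) (Finset.Icc (1:ℤ) (N:ℤ)) := by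
      rw [Finset.disjoint_left]
      intro k hk hk'
      simp only [Finset.mem_Icc, Finset.mem_Ico] at hk hk'
      omega
    rw [e1, Finset.sum_union hdisj]
    congr 1
    apply Finset.sum_congr rfl
    intro k hk
    rw [Finset.mem_Ico] at hk
    rw [hxdef, extendE_zero N v k (by omega)]
  -- lower bound the quadratic part
  have hquad : c * r ^ 2 ≤ ∑ k ∈ Finset.Icc (1 - (n:ℤ)) (N:ℤ), (1/2 : ℝ) * p k * d k ^ 2 := by
    have s1 : ∑ k ∈ Finset.Icc (1 - (n:ℤ)) (N:ℤ), (pmin/2) * d k ^ 2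
        ≤ ∑ k ∈ Finset.Icc (1 - (n:ℤ)) (N:ℤ), (1/2 : ℝ) * p k * d k ^ 2 := by
      apply Finset.sum_le_sum
      intro k hk
      have := hp k hk
      nlinarith [sq_nonneg (d k)]
    have s2 := hpoin v
    rw [← hxdef, ← hddef] at s2
    have s3 : c * r ^ 2 = (pmin/2) * (lam * ∑ k ∈ Finset.Icc (1:ℤ) (N:ℤ), x k ^ 2) := by
      rw [hr2, hcdef]; ring
    rw [s3]
    calc (pmin/2) * (lam * ∑ k ∈ Finset.Icc (1:ℤ) (N:ℤ), x k ^ 2)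
        ≤ (pmin/2) * ∑ k ∈ Finset.Icc (1 - (n:ℤ)) (N:ℤ), d k ^ 2 :=
          mul_le_mul_of_nonneg_left s2 (by positivity)
      _ = ∑ k ∈ Finset.Icc (1 - (n:ℤ)) (N:ℤ), (pmin/2) * d k ^ 2 := by
          rw [Finset.mul_sum]
      _ ≤ _ := s1
  -- conclude
  have hJ : c * r ^ 2 - |α| * N * r ^ q - (B + C0)
      ≤ ∑ k ∈ Finset.Icc (1 - (n:ℤ)) (N:ℤ),
          ((1/2 : ℝ) * p k * d k ^ 2 - F k (x k)) := by
    rw [Finset.sum_sub_distrib, hsplit]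
    linarith
  exact le_trans (hR r hv) hJ
end
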